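/- Semantic completeness (separation) of second-order polynomials: if P₁,...,P_K are second-order polynomials over ℕ that are pairwise non-equivalent under the syntactic equivalence generated by commutativity, associativity, unit, and distributivity laws with congruence, then there exist n ∈ ℕ and a nondecreasing ℓ : ℕ → ℕ such that the values ⟦P_k⟧(n,ℓ) are pairwise distinct. -/

import Mathlib

/-- Second-order polynomials over ℕ: terms over `1`, `N`, `+`, `·`, `Λ(·)`. -/
inductive SOP where
  | one : SOP
  | varN : SOP
  | add : SOP → SOP → SOP
  | mul : SOP → SOP → SOP
  | lam : SOP → SOP

/-- Semantics of a second-order polynomial at `n : ℕ` and `ℓ : ℕ → ℕ`. -/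
def SOP.eval : SOP → ℕ → (ℕ → ℕ) → ℕ
  | one, _, _ => 1
  | varN, n, _ => n
  | add P Q, n, l => P.eval n l + Q.eval n l
  | mul P Q, n, l => P.eval n l * Q.eval n l
  | lam P, n, l => l (P.eval n l)

/-- Syntactic equivalence of second-order polynomials, generated by
commutativity, associativity, unit, distributivity, and congruence. -/
inductive SOP.Equiv : SOP → SOP → Prop
  | refl (P : SOP) : SOP.Equiv P P
  | symm {P Q : SOP} : SOP.Equiv P Q → SOP.Equiv Q P
  | trans {P Q R : SOP} : SOP.Equiv P Q → SOP.Equiv Q R → SOP.Equiv P R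
  | addComm (P Q : SOP) : SOP.Equiv (.add P Q) (.add Q P)
  | addAssoc (P Q R : SOP) : SOP.Equiv (.add (.add P Q) R) (.add P (.add Q R))
  | mulComm (P Q : SOP) : SOP.Equiv (.mul P Q) (.mul Q P)
  | mulAssoc (P Q R : SOP) : SOP.Equiv (.mul (.mul P Q) R) (.mul P (.mul Q R))
  | mulOne (P : SOP) : SOP.Equiv (.mul P .one) P
  | distrib (P Q R : SOP) :
      SOP.Equiv (.mul P (.add Q R)) (.add (.mul P Q) (.mul P R))
  | addCongr {P P' Q Q' : SOP} :
      SOP.Equiv P P' → SOP.Equiv Q Q' → SOP.Equiv (.add P Q) (.add P' Q')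
  | mulCongr {P P' Q Q' : SOP} :
      SOP.Equiv P P' → SOP.Equiv Q Q' → SOP.Equiv (.mul P Q) (.mul P' Q')
  | lamCongr {P P' : SOP} : SOP.Equiv P P' → SOP.Equiv (.lam P) (.lam P')

namespace SOP

instance : Trans Equiv Equiv Equiv := ⟨Equiv.trans⟩

scoped infix:50 " ≋ " => SOP.Equiv

theorem Equiv.oneMul (P : SOP) : Equiv (.mul .one P) P :=
  (Equiv.mulComm _ _).trans (Equiv.mulOne P)

theorem Equiv.distribR (P Q R : SOP) :
    Equiv (.mul (.add P Q) R) (.add (.mul P R) (.mul Q R)) :=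
  ((Equiv.mulComm _ _).trans (Equiv.distrib _ _ _)).trans
    (Equiv.addCongr (Equiv.mulComm _ _) (Equiv.mulComm _ _))

/-- Sum of a list of SOPs (1 for the empty list; only used for nonempty lists). -/
def addList : List SOP → SOP
  | [] => .one
  | [x] => x
  | x :: y :: t => .add x (addList (y :: t))

/-- Product of a list of SOPs. -/
def mulList : List SOP → SOP
  | [] => .one
  | x :: t => .mul x (mulList t)

theorem addList_cons (x : SOP) {l : List SOP} (h : l ≠ []) :
    addList (x :: l) = .add x (addList l) := by
  cases l with
  | nil => exact absurd rfl h
  | cons y t => rfl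

theorem eval_addList {l : List SOP} (h : l ≠ []) (n : ℕ) (f : ℕ → ℕ) :
    (addList l).eval n f = (l.map fun P => P.eval n f).sum := by
  induction l with
  | nil => exact absurd rfl h
  | cons x t ih =>
    cases t with
    | nil => simp [addList, eval]
    | cons y s =>
      rw [addList_cons x (by simp)]
      simp only [eval, List.map_cons, List.sum_cons]
      rw [ih (by simp)]
      simp

theorem eval_mulList (l : List SOP) (n : ℕ) (f : ℕ → ℕ) :
    (mulList l).eval n f = (l.map fun P => P.eval n f).prod := by
  induction l with
  | nil => simp [mulList, eval]
  | cons x t ih => simp [mulList, eval, ih]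

theorem Equiv.addList_append {xs ys : List SOP} (h1 : xs ≠ []) (h2 : ys ≠ []) :
    Equiv (addList (xs ++ ys)) (.add (addList xs) (addList ys)) := by
  induction xs with
  | nil => exact absurd rfl h1
  | cons x t ih =>
    cases t with
    | nil =>
      rw [List.singleton_append, addList_cons x h2]
      exact Equiv.addCongr (Equiv.refl _) (Equiv.refl _)
    | cons y s =>
      rw [List.cons_append, addList_cons x (by simp [h2]), addList_cons x (by simp)]
      calc SOP.add x (addList (y :: s ++ ys))
          ≋ SOP.add x (.add (addList (y :: s)) (addList ys)) :=
            Equiv.addCongr (Equiv.refl _) (ih (by simp))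
        _ ≋ _ := Equiv.symm (Equiv.addAssoc _ _ _)

theorem Equiv.mulList_append (xs ys : List SOP) :
    Equiv (mulList (xs ++ ys)) (.mul (mulList xs) (mulList ys)) := by
  induction xs with
  | nil => exact Equiv.symm (Equiv.oneMul _)
  | cons x t ih =>
    calc SOP.mul x (mulList (t ++ ys))
        ≋ SOP.mul x (.mul (mulList t) (mulList ys)) :=
          Equiv.mulCongr (Equiv.refl _) ih
      _ ≋ _ := Equiv.symm (Equiv.mulAssoc _ _ _)


theorem Equiv.addList_perm {xs ys : List SOP} (h : xs.Perm ys) :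
    addList xs ≋ addList ys := by
  induction h with
  | nil => exact Equiv.refl _
  | @cons x l₁ l₂ h ih =>
    cases l₁ with
    | nil => rw [h.symm.eq_nil]; exact Equiv.refl _
    | cons a t =>
      have hl₂ : l₂ ≠ [] := by
        intro hh; subst hh; exact absurd h.eq_nil (by simp)
      rw [addList_cons x (by simp), addList_cons x hl₂]
      exact Equiv.addCongr (Equiv.refl _) ih
  | @swap x y l =>
    cases l with
    | nil => exact Equiv.addComm _ _
    | cons a t =>
      rw [addList_cons y (by simp), addList_cons x (by simp),
        addList_cons x (by simp), addList_cons y (by simp)]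
      calc SOP.add y (.add x (addList (a :: t)))
          ≋ SOP.add (.add y x) (addList (a :: t)) := Equiv.symm (Equiv.addAssoc _ _ _)
        _ ≋ SOP.add (.add x y) (addList (a :: t)) :=
            Equiv.addCongr (Equiv.addComm _ _) (Equiv.refl _)
        _ ≋ _ := Equiv.addAssoc _ _ _
  | trans h1 h2 ih1 ih2 => exact ih1.trans ih2

theorem Equiv.mulList_perm {xs ys : List SOP} (h : xs.Perm ys) :
    mulList xs ≋ mulList ys := by
  induction h with
  | nil => exact Equiv.refl _
  | cons x h ih => exact Equiv.mulCongr (Equiv.refl _) ih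
  | swap x y l =>
    calc SOP.mul y (.mul x (mulList l))
        ≋ SOP.mul (.mul y x) (mulList l) := Equiv.symm (Equiv.mulAssoc _ _ _)
      _ ≋ SOP.mul (.mul x y) (mulList l) :=
          Equiv.mulCongr (Equiv.mulComm _ _) (Equiv.refl _)
      _ ≋ _ := Equiv.mulAssoc _ _ _
  | trans h1 h2 ih1 ih2 => exact ih1.trans ih2

theorem Equiv.addList_forall₂ {xs ys : List SOP} (h : List.Forall₂ Equiv xs ys) :
    addList xs ≋ addList ys := by
  induction h with
  | nil => exact Equiv.refl _
  | @cons a b l₁ l₂ hab h ih =>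
    cases h with
    | nil => exact hab
    | cons h1 h2 =>
      rw [addList_cons a (by simp), addList_cons b (by simp)]
      exact Equiv.addCongr hab ih

theorem Equiv.mulList_forall₂ {xs ys : List SOP} (h : List.Forall₂ Equiv xs ys) :
    mulList xs ≋ mulList ys := by
  induction h with
  | nil => exact Equiv.refl _
  | cons hab h ih => exact Equiv.mulCongr hab ih

theorem Equiv.mul_addList (x : SOP) {ys : List SOP} (h : ys ≠ []) :
    SOP.mul x (addList ys) ≋ addList (ys.map (fun y => .mul x y)) := by
  induction ys with
  | nil => exact absurd rfl h
  | cons y t ih =>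
    cases t with
    | nil => exact Equiv.refl _
    | cons a s =>
      rw [addList_cons y (by simp), List.map_cons,
        addList_cons (SOP.mul x y) (by simp)]
      exact (Equiv.distrib _ _ _).trans
        (Equiv.addCongr (Equiv.refl _) (ih (by simp)))

theorem Equiv.addList_mul_addList {xs ys : List SOP} (h1 : xs ≠ []) (h2 : ys ≠ []) :
    SOP.mul (addList xs) (addList ys)
      ≋ addList (xs.flatMap fun x => ys.map (fun y => .mul x y)) := by
  induction xs with
  | nil => exact absurd rfl h1
  | cons x t ih =>
    cases t with
    | nil =>
      simp only [List.flatMap_cons, List.flatMap_nil, List.append_nil]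
      exact Equiv.mul_addList x h2
    | cons a s =>
      rw [addList_cons x (by simp), List.flatMap_cons]
      calc SOP.mul (.add x (addList (a :: s))) (addList ys)
          ≋ SOP.add (.mul x (addList ys)) (.mul (addList (a :: s)) (addList ys)) :=
            Equiv.distribR _ _ _
        _ ≋ SOP.add (addList (ys.map fun y => .mul x y))
              (addList ((a :: s).flatMap fun x => ys.map (fun y => .mul x y))) :=
            Equiv.addCongr (Equiv.mul_addList x h2) (ih (by simp))
        _ ≋ _ := by
            refine Equiv.symm (Equiv.addList_append ?_ ?_)
            · simpa using h2
            · simp only [List.flatMap_cons, ne_eq, List.append_eq_nil_iff]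
              simp [h2]

end SOP

/-- Normal-form atoms: the variable `N` or `Λ(p)` where `p` is a normal-form
polynomial, represented as a list of monomials, each a list of atoms. -/
inductive NFAtom where
  | nvar : NFAtom
  | nlam : List (List NFAtom) → NFAtom

namespace SOP

mutual
  /-- SOP term of a normal-form atom. -/
  def atomS : NFAtom → SOP
    | .nvar => .varN
    | .nlam p => .lam (polyS p)
  /-- SOP term of a normal-form monomial. -/
  def monS : List NFAtom → SOP
    | [] => .one
    | a :: as => .mul (atomS a) (monS as)
  /-- SOP term of a normal-form polynomial. -/
  def polyS : List (List NFAtom) → SOP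
    | [] => .one
    | [m] => monS m
    | m :: m' :: ms => .add (monS m) (polyS (m' :: ms))
end

theorem monS_eq_mulList (m : List NFAtom) : monS m = mulList (m.map atomS) := by
  induction m with
  | nil => rfl
  | cons a as ih => simp [monS, mulList, ih]

theorem polyS_eq_addList (p : List (List NFAtom)) : polyS p = addList (p.map monS) := by
  induction p with
  | nil => rfl
  | cons m ms ih =>
    cases ms with
    | nil => rfl
    | cons m' t =>
      rw [List.map_cons, addList_cons _ (by simp)]
      simp [polyS, ih]

/-- Normalization of an SOP into a list of monomials. -/
def nf : SOP → List (List NFAtom)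
  | .one => [[]]
  | .varN => [[.nvar]]
  | .add P Q => nf P ++ nf Q
  | .mul P Q => (nf P).flatMap fun m => (nf Q).map (fun m' => m ++ m')
  | .lam P => [[.nlam (nf P)]]

theorem nf_ne_nil (P : SOP) : nf P ≠ [] := by
  induction P with
  | one => simp [nf]
  | varN => simp [nf]
  | add P Q ihP ihQ => simp [nf, ihP]
  | mul P Q ihP ihQ =>
    simp only [nf]
    cases hP : nf P with
    | nil => exact absurd hP ihP
    | cons m t =>
      simp only [List.flatMap_cons, ne_eq, List.append_eq_nil_iff]
      intro ⟨h1, h2⟩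
      exact ihQ (List.map_eq_nil_iff.mp h1)
  | lam P ih => simp [nf]


theorem forall₂_map_map {α β : Type*} (R : β → β → Prop) (f g : α → β) :
    ∀ l : List α, (∀ a ∈ l, R (f a) (g a)) → List.Forall₂ R (l.map f) (l.map g)
  | [], _ => List.Forall₂.nil
  | a :: t, h => List.Forall₂.cons (h a (by simp))
      (forall₂_map_map R f g t fun x hx => h x (by simp [hx]))

theorem forall₂_append' {α : Type*} {R : α → α → Prop} :
    ∀ {l₁ l₂ l₃ l₄ : List α}, List.Forall₂ R l₁ l₂ → List.Forall₂ R l₃ l₄ →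
      List.Forall₂ R (l₁ ++ l₃) (l₂ ++ l₄)
  | _, _, _, _, List.Forall₂.nil, h => h
  | _, _, _, _, List.Forall₂.cons hab h, h' =>
      List.Forall₂.cons hab (forall₂_append' h h')

theorem forall₂_flatMap {α β : Type*} (R : β → β → Prop) (f g : α → List β) :
    ∀ l : List α, (∀ a ∈ l, List.Forall₂ R (f a) (g a)) →
      List.Forall₂ R (l.flatMap f) (l.flatMap g)
  | [], _ => List.Forall₂.nil
  | a :: t, h => by
    simp only [List.flatMap_cons]
    exact forall₂_append' (h a (by simp))
      (forall₂_flatMap R f g t fun x hx => h x (by simp [hx]))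

theorem Equiv.monS_append (m m' : List NFAtom) :
    monS (m ++ m') ≋ .mul (monS m) (monS m') := by
  rw [monS_eq_mulList, monS_eq_mulList, monS_eq_mulList, List.map_append]
  exact Equiv.mulList_append _ _

/-- Correctness of normalization. -/
theorem Equiv.nf_correct (P : SOP) : P ≋ polyS (nf P) := by
  induction P with
  | one => exact Equiv.refl _
  | varN => exact Equiv.symm (Equiv.mulOne _)
  | add P Q ihP ihQ =>
    rw [polyS_eq_addList, nf, List.map_append]
    calc SOP.add P Q
        ≋ SOP.add (addList ((nf P).map monS)) (addList ((nf Q).map monS)) := by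
          refine Equiv.addCongr ?_ ?_
          · rw [← polyS_eq_addList]; exact ihP
          · rw [← polyS_eq_addList]; exact ihQ
      _ ≋ _ := Equiv.symm (Equiv.addList_append (by simp [nf_ne_nil]) (by simp [nf_ne_nil]))
  | mul P Q ihP ihQ =>
    rw [polyS_eq_addList, nf]
    calc SOP.mul P Q
        ≋ SOP.mul (addList ((nf P).map monS)) (addList ((nf Q).map monS)) := by
          refine Equiv.mulCongr ?_ ?_
          · rw [← polyS_eq_addList]; exact ihP
          · rw [← polyS_eq_addList]; exact ihQ
      _ ≋ addList (((nf P).map monS).flatMap fun x => ((nf Q).map monS).map (fun y => .mul x y)) :=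
          Equiv.addList_mul_addList (by simp [nf_ne_nil]) (by simp [nf_ne_nil])
      _ ≋ _ := by
          rw [List.map_flatMap]
          refine Equiv.addList_forall₂ ?_
          rw [List.flatMap_map]
          refine forall₂_flatMap _ _ _ _ fun m _ => ?_
          simp only [List.map_map]
          refine forall₂_map_map _ _ _ _ fun m' _ => ?_
          exact Equiv.symm (Equiv.monS_append m m')
  | lam P ih =>
    exact (Equiv.lamCongr ih).trans (Equiv.symm (Equiv.mulOne _))

mutual
  /-- Size of an atom. -/
  def szA : NFAtom → ℕ
    | .nvar => 1
    | .nlam p => szP p + 1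
  /-- Size of a monomial. -/
  def szM : List NFAtom → ℕ
    | [] => 1
    | a :: as => szA a + szM as
  /-- Size of a polynomial. -/
  def szP : List (List NFAtom) → ℕ
    | [] => 1
    | m :: ms => szM m + szP ms
end

theorem szA_pos (a : NFAtom) : 1 ≤ szA a := by
  cases a <;> simp [szA]

theorem szM_pos (m : List NFAtom) : 1 ≤ szM m := by
  cases m with
  | nil => simp [szM]
  | cons a as => rw [szM]; have := szA_pos a; omega

theorem szP_pos (p : List (List NFAtom)) : 1 ≤ szP p := by
  cases p with
  | nil => simp [szP]
  | cons m ms => rw [szP]; have := szM_pos m; omega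

theorem length_lt_szM (m : List NFAtom) : m.length < szM m := by
  induction m with
  | nil => simp [szM]
  | cons a as ih => have := szA_pos a; simp [szM]; omega

theorem length_lt_szP (p : List (List NFAtom)) : p.length < szP p := by
  induction p with
  | nil => simp [szP]
  | cons m ms ih => have := szM_pos m; simp [szP]; omega

theorem szM_le_szP {m : List NFAtom} {p : List (List NFAtom)} (h : m ∈ p) :
    szM m ≤ szP p := by
  induction p with
  | nil => simp at h
  | cons m' ms ih =>
    rcases List.mem_cons.mp h with h | h
    · subst h; rw [szP]; omega
    · have := ih h; rw [szP]; omega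

theorem szA_le_szM {a : NFAtom} {m : List NFAtom} (h : a ∈ m) :
    szA a ≤ szM m := by
  induction m with
  | nil => simp at h
  | cons a' as ih =>
    rcases List.mem_cons.mp h with h | h
    · subst h; rw [szM]; omega
    · have := ih h; rw [szM]; omega

theorem szP_lt_szA_nlam (p : List (List NFAtom)) : szP p < szA (.nlam p) := by
  simp [szA]

mutual
  /-- Well-formedness of an atom. -/
  def wfA : NFAtom → Prop
    | .nvar => True
    | .nlam p => p ≠ [] ∧ wfL p
  /-- Well-formedness of a monomial. -/
  def wfM : List NFAtom → Prop
    | [] => True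
    | a :: as => wfA a ∧ wfM as
  /-- Well-formedness of a list of monomials. -/
  def wfL : List (List NFAtom) → Prop
    | [] => True
    | m :: ms => wfM m ∧ wfL ms
end

theorem wfM_of_mem {m : List NFAtom} {p : List (List NFAtom)} (hp : wfL p) (h : m ∈ p) :
    wfM m := by
  induction p with
  | nil => simp at h
  | cons m' ms ih =>
    rw [wfL] at hp
    rcases List.mem_cons.mp h with h | h
    · subst h; exact hp.1
    · exact ih hp.2 h

theorem wfA_of_mem {a : NFAtom} {m : List NFAtom} (hm : wfM m) (h : a ∈ m) :
    wfA a := by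
  induction m with
  | nil => simp at h
  | cons a' as ih =>
    rw [wfM] at hm
    rcases List.mem_cons.mp h with h | h
    · subst h; exact hm.1
    · exact ih hm.2 h

theorem wfL_append {p q : List (List NFAtom)} (hp : wfL p) (hq : wfL q) :
    wfL (p ++ q) := by
  induction p with
  | nil => simpa using hq
  | cons m ms ih =>
    rw [wfL] at hp
    exact ⟨hp.1, ih hp.2⟩

theorem wfM_append {m m' : List NFAtom} (hm : wfM m) (hm' : wfM m') :
    wfM (m ++ m') := by
  induction m with
  | nil => simpa using hm'
  | cons a as ih =>
    rw [wfM] at hm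
    exact ⟨hm.1, ih hm.2⟩

theorem wfL_of_forall {p : List (List NFAtom)} (h : ∀ m ∈ p, wfM m) : wfL p := by
  induction p with
  | nil => trivial
  | cons m ms ih =>
    exact ⟨h m (by simp), ih fun x hx => h x (by simp [hx])⟩

theorem wfL_nf (P : SOP) : wfL (nf P) := by
  induction P with
  | one => exact ⟨trivial, trivial⟩
  | varN => exact ⟨⟨trivial, trivial⟩, trivial⟩
  | add P Q ihP ihQ => exact wfL_append ihP ihQ
  | mul P Q ihP ihQ =>
    refine wfL_of_forall fun m hm => ?_
    rw [nf, List.mem_flatMap] at hm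
    obtain ⟨m1, hm1, hm2⟩ := hm
    obtain ⟨m2, hm2', rfl⟩ := List.mem_map.mp hm2
    exact wfM_append (wfM_of_mem ihP hm1) (wfM_of_mem ihQ hm2')
  | lam P ih => exact ⟨⟨⟨nf_ne_nil P, ih⟩, trivial⟩, trivial⟩

/-- Everything evaluates to a positive number when inputs are positive. -/
theorem eval_pos (Q : SOP) (n : ℕ) (f : ℕ → ℕ) (hn : 1 ≤ n) (hf : ∀ k, 1 ≤ f k) :
    1 ≤ Q.eval n f := by
  induction Q with
  | one => exact le_refl 1
  | varN => exact hn
  | add P Q ihP ihQ => exact le_trans ihP (by simp [eval])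
  | mul P Q ihP ihQ => exact Nat.one_le_iff_ne_zero.mpr (by simp [eval]; omega)
  | lam P ih => exact hf _

/-- The fast-growing monotone function used for separation. -/
def ell (B : ℕ) : ℕ → ℕ := fun m => B ^ (B ^ m)

/-- Value of a normal-form polynomial. -/
def vP (B : ℕ) (p : List (List NFAtom)) : ℕ := (polyS p).eval B (ell B)

/-- Exponent code of an atom. -/
def uA (B : ℕ) : NFAtom → ℕ
  | .nvar => 0
  | .nlam p => vP B p

/-- Exponent of a monomial. -/
def expM (B : ℕ) (m : List NFAtom) : ℕ := (m.map fun a => B ^ uA B a).sum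

theorem vP_pos {B : ℕ} (hB : 1 ≤ B) (p : List (List NFAtom)) : 1 ≤ vP B p :=
  eval_pos _ _ _ hB fun k => Nat.one_le_pow _ _ (by omega)

theorem uA_nlam_pos {B : ℕ} (hB : 1 ≤ B) (p : List (List NFAtom)) :
    1 ≤ uA B (.nlam p) := vP_pos hB p

theorem eval_atomS (B : ℕ) (a : NFAtom) :
    (atomS a).eval B (ell B) = B ^ (B ^ uA B a) := by
  cases a with
  | nvar => simp [atomS, eval, uA]
  | nlam p => rfl

theorem eval_monS (B : ℕ) (m : List NFAtom) :
    (monS m).eval B (ell B) = B ^ expM B m := by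
  induction m with
  | nil => simp [monS, eval, expM]
  | cons a as ih =>
    rw [monS]
    show (atomS a).eval B (ell B) * (monS as).eval B (ell B) = _
    rw [eval_atomS, ih, ← pow_add]
    simp only [expM, List.map_cons, List.sum_cons]

theorem vP_eq_sum {B : ℕ} {p : List (List NFAtom)} (h : p ≠ []) :
    vP B p = ((p.map (expM B)).map (B ^ ·)).sum := by
  rw [vP, polyS_eq_addList, eval_addList (by simpa using h), List.map_map, List.map_map]
  congr 1
  refine List.map_congr_left fun m _ => ?_
  exact eval_monS B m

/-- Strip one power of `B`: keep predecessors of the nonzero entries. -/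
def redu (l : List ℕ) : List ℕ := l.filterMap fun e =>
  match e with
  | 0 => none
  | Nat.succ k => some k

theorem count_redu (l : List ℕ) (k : ℕ) : (redu l).count k = l.count (k + 1) := by
  induction l with
  | nil => simp [redu]
  | cons e t ih =>
    cases e with
    | zero => simpa [redu, List.filterMap_cons] using ih
    | succ j =>
      simp only [redu, List.filterMap_cons] at *
      rcases eq_or_ne j k with rfl | hj
      · simp [List.count_cons, ih]
      · simp [List.count_cons, ih, hj, Ne.symm hj]

theorem sum_split (B : ℕ) (l : List ℕ) :
    (l.map (B ^ ·)).sum = l.count 0 + B * ((redu l).map (B ^ ·)).sum := by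
  induction l with
  | nil => simp [redu]
  | cons e t ih =>
    cases e with
    | zero =>
      simp only [redu, List.filterMap_cons] at *
      simp [List.count_cons, ih]
      omega
    | succ j =>
      simp only [redu, List.filterMap_cons] at *
      simp [List.count_cons, ih, pow_succ]
      ring

/-- Key uniqueness: sums of powers of `B` with multiplicities `< B` determine
the multiset of exponents. -/
theorem pow_sum_inj {B : ℕ} (hB : 2 ≤ B) :
    ∀ v : ℕ, ∀ xs ys : List ℕ, (∀ k, xs.count k < B) → (∀ k, ys.count k < B) →
      (xs.map (B ^ ·)).sum = v → (ys.map (B ^ ·)).sum = v → xs.Perm ys := by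
  intro v
  induction v using Nat.strong_induction_on with
  | _ v IH =>
    intro xs ys hxc hyc hxs hys
    rcases Nat.eq_zero_or_pos v with rfl | hv
    · cases xs with
      | nil =>
        cases ys with
        | nil => exact List.Perm.refl _
        | cons y t =>
          exfalso
          simp only [List.map_cons, List.sum_cons] at hys
          have : 0 < B ^ y := Nat.pow_pos (by omega)
          omega
      | cons x t =>
        exfalso
        simp only [List.map_cons, List.sum_cons] at hxs
        have : 0 < B ^ x := Nat.pow_pos (by omega)
        omega
    · have hx := sum_split B xs
      have hy := sum_split B ys
      rw [hxs] at hx; rw [hys] at hy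
      -- digits
      have hc0 : xs.count 0 = ys.count 0 := by
        have h1 : v % B = xs.count 0 := by
          rw [hx]; rw [Nat.add_mul_mod_self_left]; exact Nat.mod_eq_of_lt (hxc 0)
        have h2 : v % B = ys.count 0 := by
          rw [hy]; rw [Nat.add_mul_mod_self_left]; exact Nat.mod_eq_of_lt (hyc 0)
        omega
      have hq : ((redu xs).map (B ^ ·)).sum = ((redu ys).map (B ^ ·)).sum := by
        have h1 : v / B = ((redu xs).map (B ^ ·)).sum := by
          rw [hx, Nat.add_mul_div_left _ _ (by omega : 0 < B),
            Nat.div_eq_of_lt (hxc 0), Nat.zero_add]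
        have h2 : v / B = ((redu ys).map (B ^ ·)).sum := by
          rw [hy, Nat.add_mul_div_left _ _ (by omega : 0 < B),
            Nat.div_eq_of_lt (hyc 0), Nat.zero_add]
        omega
      have hlt : ((redu xs).map (B ^ ·)).sum < v := by
        have h1 : v / B = ((redu xs).map (B ^ ·)).sum := by
          rw [hx, Nat.add_mul_div_left _ _ (by omega : 0 < B),
            Nat.div_eq_of_lt (hxc 0), Nat.zero_add]
        have := Nat.div_lt_self hv (by omega : 1 < B)
        omega
      have hperm : (redu xs).Perm (redu ys) := by
        refine IH _ hlt _ _ (fun k => ?_) (fun k => ?_) rfl hq.symm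
        · rw [count_redu]; exact hxc (k + 1)
        · rw [count_redu]; exact hyc (k + 1)
      rw [List.perm_iff_count]
      intro k
      cases k with
      | zero => exact hc0
      | succ j =>
        rw [← count_redu, ← count_redu, List.Perm.count_eq hperm]

/-- Matching lemma: a permutation of images lifts to a relational matching. -/
theorem perm_map_exists {α β : Type*} (f : α → β) :
    ∀ {xs ys : List α}, ((xs.map f).Perm (ys.map f)) →
      ∃ ys', ys.Perm ys' ∧ List.Forall₂ (fun a b => f a = f b) xs ys' := by
  classical
  intro xs
  induction xs with
  | nil =>
    intro ys h
    have : ys.map f = [] := h.symm.eq_nil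
    rw [List.map_eq_nil_iff] at this
    subst this
    exact ⟨[], List.Perm.refl _, List.Forall₂.nil⟩
  | cons x t ih =>
    intro ys h
    have hmem : f x ∈ ys.map f := h.subset (by simp)
    obtain ⟨b, hb, hfb⟩ := List.mem_map.mp hmem
    have hys : ys.Perm (b :: ys.erase b) := List.perm_cons_erase hb
    have h2 : ((x :: t).map f).Perm (f b :: (ys.erase b).map f) :=
      h.trans (by simpa using hys.map f)
    rw [List.map_cons, ← hfb] at h2
    have h3 : (t.map f).Perm ((ys.erase b).map f) := h2.cons_inv
    obtain ⟨ys'', hp, hf2⟩ := ih h3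
    exact ⟨b :: ys'', hys.trans (hp.cons b), List.Forall₂.cons hfb.symm hf2⟩

theorem forall₂_map_mem {α β : Type*} {R : α → α → Prop} {S : β → β → Prop}
    {f g : α → β} :
    ∀ {l1 l2 : List α}, List.Forall₂ R l1 l2 →
      (∀ a ∈ l1, ∀ b ∈ l2, R a b → S (f a) (g b)) →
      List.Forall₂ S (l1.map f) (l2.map g)
  | _, _, List.Forall₂.nil, _ => List.Forall₂.nil
  | _, _, List.Forall₂.cons hab h, hi =>
    List.Forall₂.cons (hi _ (by simp) _ (by simp) hab)
      (forall₂_map_mem h fun a ha b hb hr => hi a (by simp [ha]) b (by simp [hb]) hr)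

/-- Soundness: equivalent polynomials evaluate equally. -/
theorem Equiv.eval_eq {P Q : SOP} (h : P ≋ Q) (n : ℕ) (f : ℕ → ℕ) :
    P.eval n f = Q.eval n f := by
  induction h with
  | refl => rfl
  | symm _ ih => exact ih.symm
  | trans _ _ ih1 ih2 => exact ih1.trans ih2
  | addComm => simp [eval, Nat.add_comm]
  | addAssoc => simp [eval, Nat.add_assoc]
  | mulComm => simp [eval, Nat.mul_comm]
  | mulAssoc => simp [eval, Nat.mul_assoc]
  | mulOne => simp [eval]
  | distrib => simp [eval, Nat.mul_add]
  | addCongr _ _ ih1 ih2 => simp [eval, ih1, ih2]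
  | mulCongr _ _ ih1 ih2 => simp [eval, ih1, ih2]
  | lamCongr _ ih => simp [eval, ih]

/-- Completeness: well-formed, suitably bounded normal forms with equal values
are syntactically equivalent. -/
theorem main_inj {B : ℕ} (hB : 2 ≤ B) :
    ∀ v : ℕ, ∀ p q : List (List NFAtom),
      p ≠ [] → q ≠ [] → wfL p → wfL q → szP p ≤ B → szP q ≤ B →
      vP B p = v → vP B q = v → polyS p ≋ polyS q := by
  intro v
  induction v using Nat.strong_induction_on with
  | _ v IH =>
    intro p q hp0 hq0 hpw hqw hps hqs hpv hqv
    have hB1 : (1 : ℕ) < B := by omega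
    -- atom-level claim
    have atomCl : ∀ (a a' : NFAtom), wfA a → wfA a' → szA a ≤ B → szA a' ≤ B →
        uA B a = uA B a' → uA B a < v → atomS a ≋ atomS a' := by
      intro a a' hwa hwa' hsa hsa' hu hlt
      cases a with
      | nvar =>
        cases a' with
        | nvar => exact Equiv.refl _
        | nlam p' =>
          exfalso
          have := vP_pos (by omega : 1 ≤ B) p'
          simp only [uA] at hu
          omega
      | nlam pa =>
        cases a' with
        | nvar =>
          exfalso
          have := vP_pos (by omega : 1 ≤ B) pa
          simp only [uA] at hu
          omega
        | nlam pa' =>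
          simp only [uA] at hu hlt
          rw [wfA] at hwa hwa'
          rw [szA] at hsa hsa'
          exact Equiv.lamCongr
            (IH _ hlt pa pa' hwa.1 hwa'.1 hwa.2 hwa'.2 (by omega) (by omega) rfl hu.symm)
    -- monomial-level claim
    have monCl : ∀ (m m' : List NFAtom), wfM m → wfM m' → szM m ≤ B → szM m' ≤ B →
        expM B m = expM B m' → (∀ a ∈ m, uA B a < v) → (∀ a ∈ m', uA B a < v) →
        monS m ≋ monS m' := by
      intro m m' hwm hwm' hsm hsm' he hlt hlt'
      have hsum : ((m.map (uA B)).map (B ^ ·)).sum = ((m'.map (uA B)).map (B ^ ·)).sum := by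
        simp only [List.map_map]
        simpa [expM, Function.comp_def] using he
      have hperm : (m.map (uA B)).Perm (m'.map (uA B)) := by
        refine pow_sum_inj hB _ _ _ (fun k => ?_) (fun k => ?_) rfl hsum.symm
        · calc (m.map (uA B)).count k ≤ (m.map (uA B)).length := List.count_le_length
            _ = m.length := List.length_map _
            _ < szM m := length_lt_szM m
            _ ≤ B := hsm
        · calc (m'.map (uA B)).count k ≤ (m'.map (uA B)).length := List.count_le_length
            _ = m'.length := List.length_map _
            _ < szM m' := length_lt_szM m'
            _ ≤ B := hsm'
      obtain ⟨m'', hp2, hfa⟩ := perm_map_exists (uA B) hperm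
      have e1 : monS m' ≋ monS m'' := by
        rw [monS_eq_mulList, monS_eq_mulList]
        exact Equiv.mulList_perm (hp2.map atomS)
      have e2 : monS m ≋ monS m'' := by
        rw [monS_eq_mulList, monS_eq_mulList]
        refine Equiv.mulList_forall₂ (forall₂_map_mem hfa ?_)
        intro a ha a' ha' hu
        have ha'm : a' ∈ m' := hp2.symm.subset ha'
        exact atomCl a a' (wfA_of_mem hwm ha) (wfA_of_mem hwm' ha'm)
          (le_trans (szA_le_szM ha) hsm) (le_trans (szA_le_szM ha'm) hsm')
          hu (hlt a ha)
      exact e2.trans e1.symm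
    -- bound: atoms of monomials of p have small codes
    have codeBound : ∀ r : List (List NFAtom), vP B r = v → ∀ m ∈ r, ∀ a ∈ m, uA B a < v := by
      intro r hrv m hm a ha
      have h1 : B ^ uA B a ≤ expM B m := by
        refine List.single_le_sum (fun x _ => Nat.zero_le x) _ ?_
        exact List.mem_map.mpr ⟨a, ha, rfl⟩
      have h2 : B ^ expM B m ≤ v := by
        rw [← hrv, vP_eq_sum (by rintro rfl; simp at hm)]
        refine List.single_le_sum (fun x _ => Nat.zero_le x) _ ?_
        simp only [List.map_map]
        exact List.mem_map.mpr ⟨m, hm, rfl⟩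
      have h3 : uA B a < B ^ uA B a := Nat.lt_pow_self hB1
      have h4 : expM B m < B ^ expM B m := Nat.lt_pow_self hB1
      omega
    -- polynomial level
    have hsum : ((p.map (expM B)).map (B ^ ·)).sum = ((q.map (expM B)).map (B ^ ·)).sum := by
      rw [← vP_eq_sum hp0, ← vP_eq_sum hq0, hpv, hqv]
    have hperm : (p.map (expM B)).Perm (q.map (expM B)) := by
      refine pow_sum_inj hB _ _ _ (fun k => ?_) (fun k => ?_) rfl hsum.symm
      · calc (p.map (expM B)).count k ≤ (p.map (expM B)).length := List.count_le_length
          _ = p.length := List.length_map _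
          _ < szP p := length_lt_szP p
          _ ≤ B := hps
      · calc (q.map (expM B)).count k ≤ (q.map (expM B)).length := List.count_le_length
          _ = q.length := List.length_map _
          _ < szP q := length_lt_szP q
          _ ≤ B := hqs
    obtain ⟨q', hp2, hfa⟩ := perm_map_exists (expM B) hperm
    have e1 : polyS q ≋ polyS q' := by
      rw [polyS_eq_addList, polyS_eq_addList]
      exact Equiv.addList_perm (hp2.map monS)
    have e2 : polyS p ≋ polyS q' := by
      rw [polyS_eq_addList, polyS_eq_addList]
      refine Equiv.addList_forall₂ (forall₂_map_mem hfa ?_)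
      intro m hm m' hm' he
      have hm'q : m' ∈ q := hp2.symm.subset hm'
      exact monCl m m' (wfM_of_mem hpw hm) (wfM_of_mem hqw hm'q)
        (le_trans (szM_le_szP hm) hps) (le_trans (szM_le_szP hm'q) hqs)
        he (fun a ha => codeBound p hpv m hm a ha)
        (fun a ha => codeBound q hqv m' hm'q a ha)
    exact e2.trans e1.symm

end SOP
/-- Semantic separation: pairwise syntactically non-equivalent second-order
polynomials can be made to evaluate pairwise distinctly. -/
theorem SOP.semantic_separation {K : ℕ} (P : Fin K → SOP)
    (h : ∀ i j : Fin K, i ≠ j → ¬ SOP.Equiv (P i) (P j)) :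
    ∃ (n : ℕ) (l : ℕ → ℕ), Monotone l ∧
      ∀ i j : Fin K, i ≠ j → (P i).eval n l ≠ (P j).eval n l := by
  classical
  set B : ℕ := (Finset.univ.sup fun i : Fin K => szP (nf (P i))) + 2 with hBdef
  have hB : 2 ≤ B := by omega
  have hsz : ∀ i : Fin K, szP (nf (P i)) ≤ B := by
    intro i
    have h1 := Finset.le_sup (f := fun i : Fin K => szP (nf (P i))) (Finset.mem_univ i)
    omega
  refine ⟨B, ell B, ?_, ?_⟩
  · intro a b hab
    exact Nat.pow_le_pow_right (by omega) (Nat.pow_le_pow_right (by omega) hab)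
  · intro i j hij heq
    refine h i j hij ?_
    have hi := Equiv.nf_correct (P i)
    have hj := Equiv.nf_correct (P j)
    have hvi : vP B (nf (P i)) = (P i).eval B (ell B) := (hi.eval_eq B (ell B)).symm
    have hvj : vP B (nf (P j)) = (P i).eval B (ell B) := by
      rw [heq]
      exact (hj.eval_eq B (ell B)).symm
    have hmain := main_inj hB ((P i).eval B (ell B)) (nf (P i)) (nf (P j))
      (nf_ne_nil _) (nf_ne_nil _) (wfL_nf _) (wfL_nf _) (hsz i) (hsz j) hvi hvj
    exact hi.trans (hmain.trans hj.symm)
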